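/- Let u : ℝ → ℝ be differentiable. Let φ₁, φ₂ ∈ ℝ and (ξ₂,ξ₄,ξ₆) ∈ ℝ³\{0}, set r = √(ξ₂²+ξ₄²+ξ₆²), x = (cosφ₁cosφ₂, 0, cosφ₁sinφ₂, 0, sinφ₁, 0) ∈ ℝ⁶, ξ = (0,ξ₂,0,ξ₄,0,ξ₆) ∈ ℝ⁶, and z = cosh(r)·x + i·(sinh(r)/r)·ξ ∈ ℂ⁶. Then, with η = ξ₁₂ + ξ₃₄ + ξ₅₆ ∈ M(6,ℝ), one has u′(‖z‖²)·((i·z) ∙ (η·z)) = −K(r)·(cosφ₁cosφ₂·ξ₂ + cosφ₁sinφ₂·ξ₄ + sinφ₁·ξ₆), where K(t) = u′(cosh(2t))·sinh(2t)/t. -/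

import Mathlib

open Real Complex Matrix

noncomputable section

/-- The real inner product on `ℂ^m`:
`v ∙ w = ∑ⱼ (Re vⱼ)(Re wⱼ) + (Im vⱼ)(Im wⱼ)`. -/
noncomputable def dotR {m : ℕ} (v w : Fin m → ℂ) : ℝ :=
  ∑ j, ((v j).re * (w j).re + (v j).im * (w j).im)

/-- `ξ_{ij} = E_{ji} − E_{ij}`. -/
def xiMat {m : ℕ} (i j : Fin m) : Matrix (Fin m) (Fin m) ℝ :=
  Matrix.single j i 1 - Matrix.single i j 1

set_option maxHeartbeats 1000000 in
/-- The moment map component `μ_η` of the diagonal `SO(2)`-action on `T*S⁵`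
at points of `Φ(L₁)`, `L₁ = T^{*⊥}S² ⊂ T*S⁵`:
`u′(‖z‖²)·((i·z) ∙ (η·z)) = −K(r)·(cosφ₁cosφ₂·ξ₂ + cosφ₁sinφ₂·ξ₄ + sinφ₁·ξ₆)`
with `K(t) = u′(cosh 2t)·sinh(2t)/t`. -/
theorem stmt_4 (u : ℝ → ℝ) (hu : Differentiable ℝ u)
    (φ₁ φ₂ ξ₂ ξ₄ ξ₆ : ℝ) (hξ : ¬(ξ₂ = 0 ∧ ξ₄ = 0 ∧ ξ₆ = 0))
    (r : ℝ) (hr : r = Real.sqrt (ξ₂ ^ 2 + ξ₄ ^ 2 + ξ₆ ^ 2))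
    (x ξ : Fin 6 → ℝ)
    (hx : x = ![Real.cos φ₁ * Real.cos φ₂, 0, Real.cos φ₁ * Real.sin φ₂, 0, Real.sin φ₁, 0])
    (hξv : ξ = ![0, ξ₂, 0, ξ₄, 0, ξ₆])
    (z : Fin 6 → ℂ)
    (hz : z = fun j => ((Real.cosh r * x j : ℝ) : ℂ) +
      Complex.I * ((Real.sinh r / r * ξ j : ℝ) : ℂ))
    (η : Matrix (Fin 6) (Fin 6) ℝ) (hη : η = xiMat 0 1 + xiMat 2 3 + xiMat 4 5)
    (K : ℝ → ℝ) (hK : K = fun t => deriv u (Real.cosh (2 * t)) * Real.sinh (2 * t) / t) :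
    deriv u (dotR z z) *
        dotR (fun j => Complex.I * z j) ((η.map (fun a => (a : ℂ))).mulVec z)
      = -K r * (Real.cos φ₁ * Real.cos φ₂ * ξ₂ + Real.cos φ₁ * Real.sin φ₂ * ξ₄
          + Real.sin φ₁ * ξ₆) := by
  have hne : ξ₂ ≠ 0 ∨ ξ₄ ≠ 0 ∨ ξ₆ ≠ 0 := by tauto
  have hsum : 0 < ξ₂ ^ 2 + ξ₄ ^ 2 + ξ₆ ^ 2 := by
    rcases hne with h | h | h <;> positivity
  have hrpos : 0 < r := hr ▸ Real.sqrt_pos.2 hsum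
  have hr2 : r ^ 2 = ξ₂ ^ 2 + ξ₄ ^ 2 + ξ₆ ^ 2 := by
    rw [hr]; exact Real.sq_sqrt hsum.le
  have hx0 : x 0 = Real.cos φ₁ * Real.cos φ₂ := by rw [hx]; rfl
  have hx1 : x 1 = 0 := by rw [hx]; rfl
  have hx2 : x 2 = Real.cos φ₁ * Real.sin φ₂ := by rw [hx]; rfl
  have hx3 : x 3 = 0 := by rw [hx]; rfl
  have hx4 : x 4 = Real.sin φ₁ := by rw [hx]; rfl
  have hx5 : x 5 = 0 := by rw [hx]; rfl
  have hk0 : ξ 0 = 0 := by rw [hξv]; rfl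
  have hk1 : ξ 1 = ξ₂ := by rw [hξv]; rfl
  have hk2 : ξ 2 = 0 := by rw [hξv]; rfl
  have hk3 : ξ 3 = ξ₄ := by rw [hξv]; rfl
  have hk4 : ξ 4 = 0 := by rw [hξv]; rfl
  have hk5 : ξ 5 = ξ₆ := by rw [hξv]; rfl
  have hre : ∀ j, (z j).re = Real.cosh r * x j := by
    intro j; rw [hz]
    simp only [Complex.add_re, Complex.ofReal_re, Complex.mul_re, Complex.I_re,
      Complex.I_im, Complex.ofReal_im]
    ring
  have him : ∀ j, (z j).im = Real.sinh r / r * ξ j := by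
    intro j; rw [hz]
    simp only [Complex.add_im, Complex.ofReal_im, Complex.mul_im, Complex.I_re,
      Complex.I_im, Complex.ofReal_re]
    ring
  have hsimp : ∀ (j : Fin 6), ((η.map (fun a => (a : ℂ))).mulVec z) j
      = ∑ k, ((η j k : ℝ) : ℂ) * z k := by
    intro j; rfl
  have hw0 : ((η.map (fun a => (a : ℂ))).mulVec z) 0 = -z 1 := by
    rw [hsimp]; subst hη
    simp [Fin.sum_univ_six, xiMat, Matrix.single]
  have hw1 : ((η.map (fun a => (a : ℂ))).mulVec z) 1 = z 0 := by
    rw [hsimp]; subst hη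
    simp [Fin.sum_univ_six, xiMat, Matrix.single]
  have hw2 : ((η.map (fun a => (a : ℂ))).mulVec z) 2 = -z 3 := by
    rw [hsimp]; subst hη
    simp [Fin.sum_univ_six, xiMat, Matrix.single]
  have hw3 : ((η.map (fun a => (a : ℂ))).mulVec z) 3 = z 2 := by
    rw [hsimp]; subst hη
    simp [Fin.sum_univ_six, xiMat, Matrix.single]
  have hw4 : ((η.map (fun a => (a : ℂ))).mulVec z) 4 = -z 5 := by
    rw [hsimp]; subst hη
    simp [Fin.sum_univ_six, xiMat, Matrix.single]
  have hw5 : ((η.map (fun a => (a : ℂ))).mulVec z) 5 = z 4 := by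
    rw [hsimp]; subst hη
    simp [Fin.sum_univ_six, xiMat, Matrix.single]
  have hA : dotR z z = Real.cosh (2 * r) := by
    simp only [dotR, Fin.sum_univ_six, hre, him, hx0, hx1, hx2, hx3, hx4, hx5,
      hk0, hk1, hk2, hk3, hk4, hk5]
    rw [Real.cosh_two_mul]
    have hc : Real.cosh r ^ 2 = Real.sinh r ^ 2 + 1 := Real.cosh_sq r
    have h1 : Real.sin φ₁ ^ 2 + Real.cos φ₁ ^ 2 = 1 := Real.sin_sq_add_cos_sq φ₁
    have h2 : Real.sin φ₂ ^ 2 + Real.cos φ₂ ^ 2 = 1 := Real.sin_sq_add_cos_sq φ₂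
    have hxs : (Real.cos φ₁ * Real.cos φ₂) ^ 2 + (Real.cos φ₁ * Real.sin φ₂) ^ 2
        + (Real.sin φ₁) ^ 2 = 1 := by nlinarith [h1, h2]
    have hsr : (Real.sinh r / r) ^ 2 * (ξ₂ ^ 2 + ξ₄ ^ 2 + ξ₆ ^ 2)
        = Real.sinh r ^ 2 := by
      rw [← hr2]; field_simp
    linear_combination (Real.cosh r) ^ 2 * hxs + hsr
  have hB : dotR (fun j => Complex.I * z j) ((η.map (fun a => (a : ℂ))).mulVec z)
      = -(Real.sinh (2 * r) / r) * (Real.cos φ₁ * Real.cos φ₂ * ξ₂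
        + Real.cos φ₁ * Real.sin φ₂ * ξ₄ + Real.sin φ₁ * ξ₆) := by
    simp only [dotR, Fin.sum_univ_six, hw0, hw1, hw2, hw3, hw4, hw5,
      Complex.mul_re, Complex.mul_im, Complex.I_re, Complex.I_im,
      Complex.neg_re, Complex.neg_im, hre, him, hx0, hx1, hx2, hx3, hx4, hx5,
      hk0, hk1, hk2, hk3, hk4, hk5]
    rw [Real.sinh_two_mul]
    field_simp
    ring
  rw [hA, hB, hK]
  field_simp
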